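/- Let f : ℝᵈ → ℝᵈ be differentiable with symmetric positive definite Jacobian satisfying mI ⪯ Df(u) ⪯ MI for all u, where 0 < m ≤ M. Then for all u₁ ≠ u₂, ⟨u₁-u₂, f(u₁)-f(u₂)⟩/‖f(u₁)-f(u₂)‖² ≥ m/M², and hence the iteration z⁽ⁱ⁺¹⁾ = z⁽ⁱ⁾ - η(f(z⁽ⁱ⁾) - y) converges to the unique solution of f(z) = y for any 0 < η < 2m/M². -/

import Mathlib

open RealInnerProductSpace Filter Topology

set_option maxHeartbeats 1000000 in
theorem jacobian_bounds_convergence {d : ℕ}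
    (f : EuclideanSpace ℝ (Fin d) → EuclideanSpace ℝ (Fin d))
    (m M : ℝ) (hm : 0 < m) (hmM : m ≤ M)
    (hdiff : Differentiable ℝ f)
    (hsymm : ∀ u v w : EuclideanSpace ℝ (Fin d),
      ⟪v, fderiv ℝ f u w⟫ = ⟪w, fderiv ℝ f u v⟫)
    (hlower : ∀ u v : EuclideanSpace ℝ (Fin d), m * ‖v‖ ^ 2 ≤ ⟪v, fderiv ℝ f u v⟫)
    (hupper : ∀ u v : EuclideanSpace ℝ (Fin d), ⟪v, fderiv ℝ f u v⟫ ≤ M * ‖v‖ ^ 2) :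
    (∀ u₁ u₂ : EuclideanSpace ℝ (Fin d), u₁ ≠ u₂ →
      m / M ^ 2 ≤ ⟪u₁ - u₂, f u₁ - f u₂⟫ / ‖f u₁ - f u₂‖ ^ 2) ∧
    ∀ y : EuclideanSpace ℝ (Fin d), ∀ η : ℝ, 0 < η → η < 2 * m / M ^ 2 →
      ∃! z : EuclideanSpace ℝ (Fin d), f z = y ∧
        ∀ z₀ : EuclideanSpace ℝ (Fin d),
          Tendsto (fun i : ℕ => (fun u => u - η • (f u - y))^[i] z₀) atTop (𝓝 z) := by
  have hM : 0 < M := hm.trans_le hmM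
  -- operator norm bound on the Jacobian
  have hopnorm : ∀ u, ‖fderiv ℝ f u‖ ≤ M := by
    intro u
    set A := fderiv ℝ f u with hA
    refine ContinuousLinearMap.opNorm_le_bound A hM.le ?_
    intro v
    rcases eq_or_ne (A v) 0 with h0 | h0
    · rw [h0, norm_zero]; positivity
    have hv : v ≠ 0 := by
      intro hv; rw [hv, map_zero] at h0; exact h0 rfl
    have hvpos : 0 < ‖v‖ := norm_pos_iff.mpr hv
    have hAvpos : 0 < ‖A v‖ := norm_pos_iff.mpr h0
    set w : EuclideanSpace ℝ (Fin d) := (‖v‖ / ‖A v‖) • A v with hw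
    have hwnorm : ‖w‖ = ‖v‖ := by
      rw [hw, norm_smul, Real.norm_eq_abs, abs_div, abs_of_nonneg hvpos.le,
        abs_of_nonneg hAvpos.le]
      field_simp
    have hwAv : ⟪w, A v⟫ = ‖v‖ * ‖A v‖ := by
      rw [hw, real_inner_smul_left, real_inner_self_eq_norm_sq]
      field_simp
    have hpolar : ⟪w + v, A (w + v)⟫ - ⟪w - v, A (w - v)⟫ = 4 * ⟪w, A v⟫ := by
      have hs : ⟪v, A w⟫ = ⟪w, A v⟫ := hsymm u v w
      simp only [map_add, map_sub, inner_add_left, inner_add_right, inner_sub_left,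
        inner_sub_right]
      linarith
    have h1 : ⟪w + v, A (w + v)⟫ ≤ M * ‖w + v‖ ^ 2 := hupper u (w + v)
    have h2 : 0 ≤ ⟪w - v, A (w - v)⟫ := by
      have := hlower u (w - v); nlinarith [sq_nonneg ‖w - v‖]
    have h3 : ‖w + v‖ ^ 2 ≤ 4 * ‖v‖ ^ 2 := by
      have := norm_add_sq_real w v
      have hcs : ⟪w, v⟫ ≤ ‖w‖ * ‖v‖ := real_inner_le_norm w v
      nlinarith [hwnorm]
    have : 4 * (‖v‖ * ‖A v‖) ≤ M * (4 * ‖v‖ ^ 2) := by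
      rw [← hwAv]
      nlinarith
    nlinarith
  -- Lipschitz bound
  have hLip : ∀ u₁ u₂ : EuclideanSpace ℝ (Fin d), ‖f u₁ - f u₂‖ ≤ M * ‖u₁ - u₂‖ := by
    intro u₁ u₂
    exact convex_univ.norm_image_sub_le_of_norm_fderiv_le (fun x _ => (hdiff x)) (fun x _ => hopnorm x)
      trivial trivial
  -- strong monotonicity
  have hSM : ∀ u₁ u₂ : EuclideanSpace ℝ (Fin d),
      m * ‖u₁ - u₂‖ ^ 2 ≤ ⟪u₁ - u₂, f u₁ - f u₂⟫ := by
    intro u₁ u₂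
    set v := u₁ - u₂ with hv
    have key : ∀ t : ℝ, HasDerivAt (fun t : ℝ => ⟪v, f (u₂ + t • v)⟫ - t * (m * ‖v‖ ^ 2))
        (⟪v, fderiv ℝ f (u₂ + t • v) v⟫ - m * ‖v‖ ^ 2) t := by
      intro t
      have h1 : HasDerivAt (fun t : ℝ => u₂ + t • v) v t := by
        simpa using ((hasDerivAt_id t).smul_const v).const_add u₂
      have h2 : HasDerivAt (fun t : ℝ => f (u₂ + t • v)) (fderiv ℝ f (u₂ + t • v) v) t :=
        (hdiff _).hasFDerivAt.comp_hasDerivAt t h1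
      have h3 : HasDerivAt (fun t : ℝ => ⟪v, f (u₂ + t • v)⟫)
          ⟪v, fderiv ℝ f (u₂ + t • v) v⟫ t := by
        exact ((innerSL ℝ v).hasFDerivAt.comp_hasDerivAt t h2)
      have h4 := h3.sub ((hasDerivAt_id t).mul_const (m * ‖v‖ ^ 2))
      simp only [one_mul] at h4
      exact h4
    have hmono : Monotone (fun t : ℝ => ⟪v, f (u₂ + t • v)⟫ - t * (m * ‖v‖ ^ 2)) := by
      refine monotone_of_deriv_nonneg (fun t => (key t).differentiableAt) ?_
      intro t
      rw [(key t).deriv]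
      have := hlower (u₂ + t • v) v
      linarith
    have h01 := hmono (show (0:ℝ) ≤ 1 by norm_num)
    have hu1 : u₂ + v = u₁ := by rw [hv]; abel
    have h01' : ⟪v, f u₂⟫ - 0 * (m * ‖v‖ ^ 2) ≤ ⟪v, f (u₂ + v)⟫ - 1 * (m * ‖v‖ ^ 2) := by
      simpa using h01
    rw [hu1] at h01'
    rw [inner_sub_right]
    linarith
  have hsq : ∀ u₁ u₂ : EuclideanSpace ℝ (Fin d),
      m * ‖f u₁ - f u₂‖ ^ 2 ≤ M ^ 2 * ⟪u₁ - u₂, f u₁ - f u₂⟫ := by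
    intro u₁ u₂
    have h1 := hSM u₁ u₂
    have h2 := hLip u₁ u₂
    nlinarith [mul_self_le_mul_self (norm_nonneg (f u₁ - f u₂)) h2,
      mul_le_mul_of_nonneg_left h1 (sq_nonneg M), hm.le, sq_nonneg M]
  constructor
  · intro u₁ u₂ hne
    have hvpos : 0 < ‖u₁ - u₂‖ := by
      rw [norm_pos_iff, sub_ne_zero]; exact hne
    have h1 := hSM u₁ u₂
    have hfne : 0 < ‖f u₁ - f u₂‖ := by
      rcases (norm_nonneg (f u₁ - f u₂)).lt_or_eq with h | h
      · exact h
      · exfalso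
        have : f u₁ - f u₂ = 0 := by rwa [eq_comm, norm_eq_zero] at h
        rw [this, inner_zero_right] at h1
        nlinarith [pow_pos hvpos 2]
    rw [div_le_div_iff₀ (by positivity) (by positivity)]
    have := hsq u₁ u₂
    nlinarith
  · intro y η hη hη2
    have hηM : η * M ^ 2 < 2 * m := by
      rw [lt_div_iff₀ (by positivity)] at hη2
      linarith
    set c : ℝ := 1 - 2 * η * m + η ^ 2 * M ^ 2 with hc
    have hc0 : 0 ≤ c := by
      nlinarith [sq_nonneg (1 - η * m),
        mul_le_mul_of_nonneg_left (mul_self_le_mul_self hm.le hmM) (sq_nonneg η)]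
    have hc1 : c < 1 := by nlinarith
    set T : EuclideanSpace ℝ (Fin d) → EuclideanSpace ℝ (Fin d) :=
      fun u => u - η • (f u - y) with hT
    have hKsq : ∀ u₁ u₂, ‖T u₁ - T u₂‖ ^ 2 ≤ c * ‖u₁ - u₂‖ ^ 2 := by
      intro u₁ u₂
      have hTdiff : T u₁ - T u₂ = (u₁ - u₂) - η • (f u₁ - f u₂) := by
        simp only [hT, smul_sub]; abel
      rw [hTdiff, norm_sub_sq_real, real_inner_smul_right, norm_smul, Real.norm_eq_abs,
        mul_pow, sq_abs, hc]
      have h1 := hSM u₁ u₂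
      have h2 := hsq u₁ u₂
      have hcoef : (0:ℝ) ≤ 2 * η * m - η ^ 2 * M ^ 2 := by
        nlinarith [mul_pos hη (sub_pos.mpr hηM)]
      set P : ℝ := ⟪u₁ - u₂, f u₁ - f u₂⟫ with hP
      set A : ℝ := ‖u₁ - u₂‖ with hA2
      set B : ℝ := ‖f u₁ - f u₂‖ with hB
      have hkey : 0 ≤ (2 * η * m - η ^ 2 * M ^ 2) * (P - m * A ^ 2) :=
        mul_nonneg hcoef (by linarith)
      have e1 : η ^ 2 * (m * B ^ 2) ≤ η ^ 2 * (M ^ 2 * P) :=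
        mul_le_mul_of_nonneg_left h2 (sq_nonneg η)
      nlinarith [hkey, e1, hm]
    have hKlip : LipschitzWith (Real.toNNReal (Real.sqrt c)) T := by
      refine LipschitzWith.of_dist_le_mul ?_
      intro u₁ u₂
      rw [dist_eq_norm, dist_eq_norm, Real.coe_toNNReal _ (Real.sqrt_nonneg c)]
      have : ‖T u₁ - T u₂‖ = Real.sqrt (‖T u₁ - T u₂‖ ^ 2) := by
        rw [Real.sqrt_sq (norm_nonneg _)]
      rw [this]
      calc Real.sqrt (‖T u₁ - T u₂‖ ^ 2) ≤ Real.sqrt (c * ‖u₁ - u₂‖ ^ 2) :=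
            Real.sqrt_le_sqrt (hKsq u₁ u₂)
        _ = Real.sqrt c * ‖u₁ - u₂‖ := by
            rw [Real.sqrt_mul hc0, Real.sqrt_sq (norm_nonneg _)]
    have hsqrtlt : Real.sqrt c < 1 := by
      rw [show (1:ℝ) = Real.sqrt 1 by simp]
      exact Real.sqrt_lt_sqrt hc0 (by simpa using hc1)
    have hKlt : Real.toNNReal (Real.sqrt c) < 1 := by
      rw [← Real.toNNReal_one, Real.toNNReal_lt_toNNReal_iff one_pos]
      exact hsqrtlt
    have hcontr : ContractingWith (Real.toNNReal (Real.sqrt c)) T := ⟨hKlt, hKlip⟩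
    set z := ContractingWith.fixedPoint T hcontr with hz
    have hzfix : Function.IsFixedPt T z := hcontr.fixedPoint_isFixedPt
    have hfz : f z = y := by
      have hfix : z - η • (f z - y) = z := hzfix
      have h0 : η • (f z - y) = 0 := sub_eq_self.mp hfix
      rcases smul_eq_zero.mp h0 with h | h
      · exact absurd h (ne_of_gt hη)
      · exact sub_eq_zero.mp h
    refine ⟨z, ⟨hfz, ?_⟩, ?_⟩
    · intro z₀
      exact hcontr.tendsto_iterate_fixedPoint z₀
    · rintro z' ⟨hfz', htend'⟩
      have h1 : Tendsto (fun i : ℕ => T^[i] z) atTop (𝓝 z') := htend' z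
      have h3 : Tendsto (fun i : ℕ => T^[i] z) atTop (𝓝 z) := by
        have h2 : ∀ i : ℕ, T^[i] z = z := fun i => Function.iterate_fixed hzfix i
        simp only [h2]
        exact tendsto_const_nhds
      exact tendsto_nhds_unique h1 h3
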